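/- Let S be an additively reduced semidomain and G a linearly ordered torsion-free abelian group in which every bounded-below subset is well-ordered. If f = ∑_{i=0}^∞ s_i x^{g_i} ∈ S⟦G⟧ with all s_i nonzero and (g_{N+i+1} − g_{N+i})_{i≥0} is strictly increasing for some N, then f is monolithic. -/

import Mathlib

/-- Witness that `S` is a semidomain: an injective semiring hom into an integral domain. -/
structure SemidomainWitness (S : Type*) [CommSemiring S] where
  D : Type
  [commRing : CommRing D]
  [isDomain : IsDomain D]
  emb : S →+* D
  inj : Function.Injective emb

/-- `S` is a semidomain, i.e. (isomorphic to) a subsemiring of an integral domain. -/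
def IsSemidomain (S : Type*) [CommSemiring S] : Prop := Nonempty (SemidomainWitness S)

/-- `S` is additively reduced: `0` is the only additively invertible element. -/
def AddReduced (S : Type*) [AddZeroClass S] : Prop := ∀ a b : S, a + b = 0 → a = 0

/-- `s` is an atom of the additive monoid `(S, +)` (for `S` additively reduced):
it is nonzero and cannot be written as a sum of two nonzero elements. -/
def IsAddAtom {S : Type*} [AddZeroClass S] (s : S) : Prop :=
  s ≠ 0 ∧ ∀ a b : S, s = a + b → a = 0 ∨ b = 0

/-- `S` is additively Furstenberg: every nonzero element is divisible in `(S, +)`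
by an additive atom. -/
def AddFurstenberg (S : Type*) [AddZeroClass S] : Prop :=
  ∀ s : S, s ≠ 0 → ∃ a t : S, IsAddAtom a ∧ s = a + t


section Series
variable {S : Type*} [CommSemiring S] {G : Type*} [AddCommGroup G] [LinearOrder G]
  [IsOrderedAddMonoid G]

/-- `f` belongs to the group series semidomain `S⟦G⟧`: its support is contained in the range
of a strictly increasing sequence of exponents, so `f` is a formal sum `∑_{i=0}^∞ s_i x^{g_i}`. -/
def InSeries (f : HahnSeries G S) : Prop :=
  ∃ g : ℕ → G, StrictMono g ∧ f.support ⊆ Set.range g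

/-- A monomial `s·x^g` in `S⟦G⟧`. -/
def IsMonomialSeries (f : HahnSeries G S) : Prop :=
  ∃ (g : G) (s : S), f = HahnSeries.single g s

/-- `f` is monolithic in `S⟦G⟧`: every factorization of `f` within `S⟦G⟧` has a
monomial factor. -/
def MonolithicSeries (f : HahnSeries G S) : Prop :=
  f ≠ 0 ∧ ∀ p q : HahnSeries G S, InSeries p → InSeries q → f = p * q →
    IsMonomialSeries p ∨ IsMonomialSeries q

/-- `f` is a unit of the semidomain `S⟦G⟧`. -/
def IsUnitSeries (f : HahnSeries G S) : Prop :=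
  InSeries f ∧ ∃ h : HahnSeries G S, InSeries h ∧ f * h = 1

/-- `f` is irreducible in the multiplicative monoid of nonzero elements of `S⟦G⟧`. -/
def IrreducibleSeries (f : HahnSeries G S) : Prop :=
  InSeries f ∧ f ≠ 0 ∧ ¬ IsUnitSeries f ∧
    ∀ p q : HahnSeries G S, InSeries p → InSeries q → f = p * q →
      IsUnitSeries p ∨ IsUnitSeries q

end Series

section AuxLemmas

open Pointwise

variable {S : Type*} [CommSemiring S] {G : Type*} [AddCommGroup G] [LinearOrder G]
  [IsOrderedAddMonoid G]

/-- In an additively reduced semiring, a finite sum with a nonzero term is nonzero. -/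
lemma addReduced_sum_ne_zero {ι : Type*} [DecidableEq ι] (hred : AddReduced S) {F : Finset ι}
    {f : ι → S} {t : ι} (ht : t ∈ F) (hft : f t ≠ 0) : ∑ i ∈ F, f i ≠ 0 := by
  intro h
  rw [← Finset.add_sum_erase _ f ht] at h
  exact hft (hred _ _ h)

/-- A semidomain has no zero divisors. -/
lemma semidomain_mul_ne_zero (hS : IsSemidomain S) {x y : S} (hx : x ≠ 0) (hy : y ≠ 0) :
    x * y ≠ 0 := by
  obtain ⟨w⟩ := hS
  letI := w.commRing; letI := w.isDomain
  intro h
  have h' : w.emb x * w.emb y = 0 := by rw [← map_mul, h, map_zero]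
  have hx' : w.emb x ≠ 0 := fun hz => hx (w.inj (by rw [hz, map_zero]))
  have hy' : w.emb y ≠ 0 := fun hz => hy (w.inj (by rw [hz, map_zero]))
  exact mul_ne_zero hx' hy' h'

/-- Sums of support elements of factors lie in the support of the product. -/
lemma coeff_mul_support_ne_zero (hS : IsSemidomain S) (hred : AddReduced S)
    {p q : HahnSeries G S} {a b : G} (ha : a ∈ p.support) (hb : b ∈ q.support) :
    (p * q).coeff (a + b) ≠ 0 := by
  rw [HahnSeries.coeff_mul]
  refine addReduced_sum_ne_zero hred (t := (a, b)) ?_ ?_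
  · rw [Finset.mem_addAntidiagonal]
    exact ⟨ha, hb, rfl⟩
  · exact semidomain_mul_ne_zero hS ha hb

lemma isMonomial_of_support_subset {p : HahnSeries G S} {a : G} (h : p.support ⊆ {a}) :
    IsMonomialSeries p := by
  refine ⟨a, p.coeff a, ?_⟩
  ext c
  by_cases hc : c = a
  · subst hc; simp
  · have h1 : c ∉ p.support := fun hm => hc (h hm)
    have h2 : p.coeff c = 0 := by
      by_contra hne
      exact h1 hne
    rw [h2, HahnSeries.coeff_single_of_ne hc]

/-- Core argument: if `p` has two support elements and `q` has infinite support, their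
product's support cannot be the range of an eventually-strictly-increasing-gaps sequence. -/
lemma key_gaps_lemma (hS : IsSemidomain S) (hred : AddReduced S)
    (hwo : ∀ A : Set G, BddBelow A → A.IsWF)
    (g : ℕ → G) (hg : StrictMono g) (N : ℕ)
    (hmono : StrictMono (fun i : ℕ => g (N + i + 1) - g (N + i)))
    (p q : HahnSeries G S) (hsupp : (p * q).support = Set.range g)
    {a a' : G} (ha : a ∈ p.support) (ha' : a' ∈ p.support) (hlt : a < a')
    (hB : q.support.Infinite) : False := by
  set u := a' - a with hu
  -- Step 1: some gap exceeds u.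
  obtain ⟨m, hm⟩ : ∃ m, u < g (N + m + 1) - g (N + m) := by
    by_contra hcon
    push_neg at hcon
    set D := Set.range (fun m : ℕ => -(g (N + m + 1) - g (N + m))) with hD
    have hbdd : BddBelow D := ⟨-u, by rintro x ⟨m, rfl⟩; exact neg_le_neg (hcon m)⟩
    have hwf := hwo D hbdd
    have hne : D.Nonempty := ⟨_, ⟨0, rfl⟩⟩
    obtain ⟨m, hmmin⟩ := hwf.min_mem hne
    refine hwf.not_lt_min hne (a := -(g (N + (m+1) + 1) - g (N + (m+1)))) ⟨m + 1, rfl⟩ ?_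
    rw [← hmmin]
    exact neg_lt_neg (hmono (Nat.lt_succ_self m))
  -- Step 2: find b ∈ supp q with a + b far out in range g.
  set T := (fun b => a + b) ⁻¹' (g '' Set.Iio (N + m)) with hT
  have hTfin : T.Finite :=
    (((Set.finite_Iio (N + m)).image g)).preimage
      (Function.Injective.injOn (add_right_injective a))
  obtain ⟨b, hbB, hbT⟩ := (hB.diff hTfin).nonempty
  have habs : a + b ∈ Set.range g := by
    rw [← hsupp]
    exact coeff_mul_support_ne_zero hS hred ha hbB
  have ha'bs : a' + b ∈ Set.range g := by
    rw [← hsupp]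
    exact coeff_mul_support_ne_zero hS hred ha' hbB
  obtain ⟨i, hi⟩ := habs
  obtain ⟨j, hj⟩ := ha'bs
  have hiN : N + m ≤ i := by
    by_contra hcc
    push_neg at hcc
    exact hbT ⟨i, hcc, hi⟩
  have hij : i < j := by
    have : g i < g j := by rw [hi, hj]; exact add_lt_add_left hlt b
    exact hg.lt_iff_lt.mp this
  -- Step 3: contradiction.
  have h1 : g (i + 1) ≤ g j := hg.monotone hij
  have h2 : g j - g i = u := by rw [hi, hj, hu]; abel
  have hNi : N + (i - N) = i := by omega
  have hchain : g (N + m + 1) - g (N + m) ≤ g (N + (i - N) + 1) - g (N + (i - N)) :=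
    hmono.monotone (by omega : m ≤ i - N)
  rw [hNi] at hchain
  have h3 : g (i + 1) - g i ≤ u := by
    rw [← h2]
    exact sub_le_sub_right h1 (g i)
  exact lt_irrefl u (lt_of_lt_of_le (lt_of_lt_of_le hm hchain) h3)

end AuxLemmas

open Pointwise in
/-- If every bounded-below subset of `G` is well-ordered and the gaps of the exponent
sequence of `f ∈ S⟦G⟧` are eventually strictly increasing, then `f` is monolithic. -/
theorem series_monolithic_of_gaps_strictMono
    {S : Type*} [CommSemiring S] {G : Type*} [AddCommGroup G] [LinearOrder G]
    [IsOrderedAddMonoid G]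
    (hS : IsSemidomain S) (hred : AddReduced S)
    (hwo : ∀ A : Set G, BddBelow A → A.IsWF)
    (s : ℕ → S) (g : ℕ → G) (hg : StrictMono g) (hs : ∀ i, s i ≠ 0)
    (f : HahnSeries G S)
    (hcoeff : ∀ i, f.coeff (g i) = s i) (hsupp : f.support = Set.range g)
    (N : ℕ)
    (hmono : StrictMono (fun i : ℕ => g (N + i + 1) - g (N + i))) :
    MonolithicSeries f := by
  have hf0 : f ≠ 0 := by
    intro h
    exact hs 0 (by rw [← hcoeff 0, h, HahnSeries.coeff_zero])
  refine ⟨hf0, ?_⟩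
  intro p q hp hq hpq
  by_contra hcon
  push_neg at hcon
  obtain ⟨hpm, hqm⟩ := hcon
  -- each non-monomial factor has two support elements
  have two : ∀ r : HahnSeries G S, ¬ IsMonomialSeries r →
      ∃ a a', a ∈ r.support ∧ a' ∈ r.support ∧ a < a' := by
    intro r hr
    by_contra h
    push_neg at h
    apply hr
    rcases Set.eq_empty_or_nonempty r.support with he | ⟨a, ha⟩
    · exact isMonomial_of_support_subset (a := 0) (by rw [he]; exact Set.empty_subset _)
    · refine isMonomial_of_support_subset (a := a) ?_
      intro x hx
      exact le_antisymm (h a x ha hx) (h x a hx ha)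
  have hrange : (p * q).support = Set.range g := by rw [← hpq, hsupp]
  obtain ⟨a, a', ha, ha', hlt⟩ := two p hpm
  obtain ⟨b, b', hb, hb', hblt⟩ := two q hqm
  have hABinf : p.support.Infinite ∨ q.support.Infinite := by
    by_contra hcc
    push_neg at hcc
    obtain ⟨h1, h2⟩ := hcc
    have hsub : Set.range g ⊆ p.support + q.support :=
      hrange ▸ HahnSeries.support_mul_subset
    exact (Set.infinite_range_of_injective hg.injective) ((h1.add h2).subset hsub)
  rcases hABinf with hPinf | hQinf
  · exact key_gaps_lemma hS hred hwo g hg N hmono q p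
      (by rw [mul_comm]; exact hrange) hb hb' hblt hPinf
  · exact key_gaps_lemma hS hred hwo g hg N hmono p q hrange ha ha' hlt hQinf
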